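/- With the notation of the Bjørling data construction: V ∈ ℝ³ a unit vector, β' ∈ ℝ³ nonzero with ⟨β', V⟩ = 0, and φ = (1/2)(β' − i β' × V). Assume V₃ ≠ ±1. Then φ₁ − i φ₂ ≠ 0, φ₃ ≠ 0, and φ₃/(φ₁ − i φ₂) = −(φ₁ + i φ₂)/φ₃; moreover the common value G₀ of these two quotients satisfies |G₀|² = (1 − V₃)/(1 + V₃), so that |G₀| < 1 if and only if V₃ > 0. -/

import Mathlib

open Complex

theorem stmt_5 (b₁ b₂ b₃ V₁ V₂ V₃ : ℝ)
    (hV : V₁ ^ 2 + V₂ ^ 2 + V₃ ^ 2 = 1)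
    (hb : ¬(b₁ = 0 ∧ b₂ = 0 ∧ b₃ = 0))
    (horth : b₁ * V₁ + b₂ * V₂ + b₃ * V₃ = 0)
    (hV3 : V₃ ≠ 1) (hV3' : V₃ ≠ -1)
    (φ₁ φ₂ φ₃ : ℂ)
    (hφ₁ : φ₁ = (1 / 2) * ((b₁ : ℂ) - Complex.I * ((b₂ * V₃ - b₃ * V₂ : ℝ) : ℂ)))
    (hφ₂ : φ₂ = (1 / 2) * ((b₂ : ℂ) - Complex.I * ((b₃ * V₁ - b₁ * V₃ : ℝ) : ℂ)))
    (hφ₃ : φ₃ = (1 / 2) * ((b₃ : ℂ) - Complex.I * ((b₁ * V₂ - b₂ * V₁ : ℝ) : ℂ))) :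
    φ₁ - Complex.I * φ₂ ≠ 0 ∧ φ₃ ≠ 0 ∧
      φ₃ / (φ₁ - Complex.I * φ₂) = -((φ₁ + Complex.I * φ₂) / φ₃) ∧
      ‖φ₃ / (φ₁ - Complex.I * φ₂)‖ ^ 2 = (1 - V₃) / (1 + V₃) ∧
      (‖φ₃ / (φ₁ - Complex.I * φ₂)‖ < 1 ↔ 0 < V₃) := by
  have hV3le : -1 ≤ V₃ := by nlinarith [sq_nonneg V₁, sq_nonneg V₂]
  have hV3ge : V₃ ≤ 1 := by nlinarith [sq_nonneg V₁, sq_nonneg V₂]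
  have hVp : 0 < 1 + V₃ := by
    rcases lt_or_eq_of_le hV3le with h | h
    · linarith
    · exact absurd h.symm hV3'
  have hVm : 0 < 1 - V₃ := by
    rcases lt_or_eq_of_le hV3ge with h | h
    · linarith
    · exact absurd h hV3
  have hX : φ₁ - Complex.I * φ₂ =
      (1 / 2) * (((b₁ * (1 + V₃) - b₃ * V₁ : ℝ) : ℂ) -
        ((b₂ * (1 + V₃) - b₃ * V₂ : ℝ) : ℂ) * Complex.I) := by
    rw [hφ₁, hφ₂]
    push_cast
    linear_combination ((b₃ : ℂ) * V₁ - b₁ * V₃) / 2 * Complex.I_sq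
  have hY : φ₃ =
      (1 / 2) * ((b₃ : ℂ) - ((b₁ * V₂ - b₂ * V₁ : ℝ) : ℂ) * Complex.I) := by
    rw [hφ₃]; push_cast; ring
  -- nonvanishing of the real/imaginary parts
  have hABne : ¬(b₁ * (1 + V₃) - b₃ * V₁ = 0 ∧ b₂ * (1 + V₃) - b₃ * V₂ = 0) := by
    rintro ⟨ha, hb'⟩
    apply hb
    have h3 : b₃ = 0 := by
      have h : b₃ * (1 + V₃) = 0 := by
        linear_combination (1 + V₃) * horth - V₁ * ha - V₂ * hb' - b₃ * hV
      exact (mul_eq_zero.1 h).resolve_right (by linarith)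
    have h1 : b₁ = 0 := by
      have h : b₁ * (1 + V₃) = 0 := by rw [h3] at ha; linarith
      exact (mul_eq_zero.1 h).resolve_right (by linarith)
    have h2 : b₂ = 0 := by
      have h : b₂ * (1 + V₃) = 0 := by rw [h3] at hb'; linarith
      exact (mul_eq_zero.1 h).resolve_right (by linarith)
    exact ⟨h1, h2, h3⟩
  have hCDne : ¬(b₃ = 0 ∧ b₁ * V₂ - b₂ * V₁ = 0) := by
    rintro ⟨hc, hd⟩
    apply hb
    have h12 : 0 < 1 - V₃ ^ 2 := by nlinarith
    have horth' : b₁ * V₁ + b₂ * V₂ = 0 := by rw [hc] at horth; linarith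
    have h1 : b₁ = 0 := by
      have h : b₁ * (1 - V₃ ^ 2) = 0 := by
        linear_combination V₁ * horth' + V₂ * hd - b₁ * hV
      exact (mul_eq_zero.1 h).resolve_right (by linarith)
    have h2 : b₂ = 0 := by
      have h : b₂ * (1 - V₃ ^ 2) = 0 := by
        linear_combination V₂ * horth' - V₁ * hd - b₂ * hV
      exact (mul_eq_zero.1 h).resolve_right (by linarith)
    exact ⟨h1, h2, hc⟩
  have hABpos : 0 < (b₁ * (1 + V₃) - b₃ * V₁) ^ 2 + (b₂ * (1 + V₃) - b₃ * V₂) ^ 2 := by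
    rcases (not_and_or.1 hABne) with h | h
    · positivity
    · positivity
  have hCDpos : 0 < b₃ ^ 2 + (b₁ * V₂ - b₂ * V₁) ^ 2 := by
    rcases (not_and_or.1 hCDne) with h | h
    · positivity
    · positivity
  have hXne : φ₁ - Complex.I * φ₂ ≠ 0 := by
    rw [hX]
    intro h
    have hre := congrArg Complex.re h
    have him := congrArg Complex.im h
    simp at hre him
    exact hABne ⟨hre, by linarith⟩
  have hYne : φ₃ ≠ 0 := by
    rw [hY]
    intro h
    have hre := congrArg Complex.re h
    have him := congrArg Complex.im h
    simp at hre him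
    exact hCDne ⟨hre, by linarith⟩
  have hVc : (V₁ : ℂ) ^ 2 + (V₂ : ℂ) ^ 2 + (V₃ : ℂ) ^ 2 = 1 := by exact_mod_cast hV
  have horthc : (b₁ : ℂ) * V₁ + (b₂ : ℂ) * V₂ + (b₃ : ℂ) * V₃ = 0 := by exact_mod_cast horth
  have hsum : φ₁ ^ 2 + φ₂ ^ 2 + φ₃ ^ 2 = 0 := by
    rw [hφ₁, hφ₂, hφ₃]
    push_cast
    linear_combination
      ((((b₂:ℂ) * V₃ - b₃ * V₂) ^ 2 + ((b₃:ℂ) * V₁ - b₁ * V₃) ^ 2 +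
          ((b₁:ℂ) * V₂ - b₂ * V₁) ^ 2) / 4) * Complex.I_sq
        - (((b₁:ℂ) ^ 2 + (b₂:ℂ) ^ 2 + (b₃:ℂ) ^ 2) / 4) * hVc
        + (((b₁:ℂ) * V₁ + (b₂:ℂ) * V₂ + (b₃:ℂ) * V₃) / 4) * horthc
  have hq : ‖φ₃ / (φ₁ - Complex.I * φ₂)‖ ^ 2 = (1 - V₃) / (1 + V₃) := by
    rw [norm_div, div_pow, Complex.sq_norm, Complex.sq_norm, hX, hY]
    have h1 : Complex.normSq ((1 / 2) * ((b₃ : ℂ) - ((b₁ * V₂ - b₂ * V₁ : ℝ) : ℂ) * Complex.I)) =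
        (b₃ ^ 2 + (b₁ * V₂ - b₂ * V₁) ^ 2) / 4 := by
      simp [Complex.normSq_apply]; ring
    have h2 : Complex.normSq ((1 / 2) * (((b₁ * (1 + V₃) - b₃ * V₁ : ℝ) : ℂ) -
        ((b₂ * (1 + V₃) - b₃ * V₂ : ℝ) : ℂ) * Complex.I)) =
        ((b₁ * (1 + V₃) - b₃ * V₁) ^ 2 + (b₂ * (1 + V₃) - b₃ * V₂) ^ 2) / 4 := by
      simp [Complex.normSq_apply]; ring
    rw [h1, h2, div_eq_div_iff (by positivity) (by positivity)]
    linear_combination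
      ((-b₃ ^ 2 + b₃ ^ 2 * V₃ + b₂ ^ 2 + b₂ ^ 2 * V₃ + (1 + V₃) * b₁ ^ 2) / 4) * hV +
        ((2 * b₃ - 2 * b₃ * V₃ ^ 2 - 2 * b₂ * V₂ - 2 * b₂ * V₂ * V₃ +
          (1 + V₃) * (b₂ * V₂ + b₃ * V₃ - b₁ * V₁)) / 4) * horth
  refine ⟨hXne, hYne, ?_, hq, ?_⟩
  · rw [neg_div', div_eq_div_iff hXne hYne]
    linear_combination hsum - φ₂ ^ 2 * Complex.I_sq
  · have hnn : 0 ≤ ‖φ₃ / (φ₁ - Complex.I * φ₂)‖ := norm_nonneg _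
    constructor
    · intro h
      have h2 : ‖φ₃ / (φ₁ - Complex.I * φ₂)‖ ^ 2 < 1 := by nlinarith
      rw [hq, div_lt_one hVp] at h2
      linarith
    · intro h
      have h2 : ‖φ₃ / (φ₁ - Complex.I * φ₂)‖ ^ 2 < 1 := by
        rw [hq, div_lt_one hVp]; linarith
      nlinarith
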